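/- Let μ be a Borel probability measure on ℝ with cdf F, finite first moment, finite negative-tail second moment ∫ x²·1_{x≤0} dμ(x) < ∞, and define G(y) = ∫_{(-∞, y]} (x² − yx) dμ(x) for y ≥ 0. Then G is concave on [0, ∞). Moreover, if μ((−∞,0)) > 0 and ∫ x dμ(x) > 0, then G(0) > 0, G(y)/y → −∫ x dμ(x) < 0 as y → ∞ (so G(y) → −∞), and G has a unique zero β* > 0 on [0, ∞), with G(y) > 0 for 0 ≤ y < β* and G(y) < 0 for y > β*. -/

import Mathlib

open MeasureTheory Set Filter

lemma aux_integrableOn (μ : Measure ℝ) [IsProbabilityMeasure μ]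
    (hmom1 : Integrable (fun x : ℝ => x) μ)
    (hmom2 : IntegrableOn (fun x : ℝ => x ^ 2) (Set.Iic 0) μ)
    {y : ℝ} (hy : 0 ≤ y) :
    IntegrableOn (fun x : ℝ => x ^ 2 - y * x) (Set.Iic y) μ := by
  have h1 : IntegrableOn (fun x : ℝ => x ^ 2 - y * x) (Set.Iic 0) μ :=
    hmom2.sub (hmom1.integrableOn.const_mul y)
  have h2 : IntegrableOn (fun x : ℝ => x ^ 2 - y * x) (Set.Ioc 0 y) μ := by
    apply Measure.integrableOn_of_bounded (M := y ^ 2 + y * y) (measure_ne_top _ _)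
      ((measurable_id.pow_const 2).sub (measurable_const.mul measurable_id)).aestronglyMeasurable
    filter_upwards [ae_restrict_mem measurableSet_Ioc] with x hx
    obtain ⟨hx1, hx2⟩ := hx
    rw [Real.norm_eq_abs, abs_le]
    simp only [Pi.sub_apply, Pi.mul_apply, id_eq]
    constructor <;> nlinarith
  have heq : Set.Iic y = Set.Iic 0 ∪ Set.Ioc 0 y := (Set.Iic_union_Ioc_eq_Iic hy).symm
  rw [heq]
  exact h1.union h2

lemma aux_ind_eq {y : ℝ} (hy : 0 ≤ y) (x : ℝ) :
    (Set.Iic y).indicator (fun x => x ^ 2 - y * x) x =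
      if x < 0 then x ^ 2 - y * x else min 0 (x ^ 2 - y * x) := by
  by_cases hx : x < 0
  · rw [if_pos hx, Set.indicator_of_mem (Set.mem_Iic.2 (le_of_lt (lt_of_lt_of_le hx hy)))]
  · push_neg at hx
    rw [if_neg (not_lt.2 hx)]
    by_cases hxy : x ≤ y
    · rw [Set.indicator_of_mem (Set.mem_Iic.2 hxy), min_eq_right (by nlinarith)]
    · rw [Set.indicator_of_notMem (fun h => hxy (Set.mem_Iic.1 h)), min_eq_left (by nlinarith [not_le.1 hxy])]


/-- Let `μ` be a Borel probability measure on `ℝ` with finite first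
moment and finite negative-tail second moment, and let
`G(y) = ∫_{(-∞,y]} (x² − yx) dμ(x)`.  Then `G` is concave on `[0,∞)`.  Moreover, if
`μ((−∞,0)) > 0` and `∫ x dμ > 0`, then `G(0) > 0`, `G(y)/y → −∫ x dμ < 0` as
`y → ∞` (so `G(y) → −∞`), and `G` has a unique zero `β* > 0` on `[0,∞)`, with
`G > 0` on `[0, β*)` and `G < 0` on `(β*, ∞)`. -/
theorem G_concave_and_unique_zero (μ : Measure ℝ) [IsProbabilityMeasure μ]
    (hmom1 : Integrable (fun x : ℝ => x) μ)
    (hmom2 : IntegrableOn (fun x : ℝ => x ^ 2) (Set.Iic 0) μ)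
    (G : ℝ → ℝ)
    (hG : ∀ y, G y = ∫ x in Set.Iic y, (x ^ 2 - y * x) ∂μ) :
    ConcaveOn ℝ (Set.Ici 0) G
    ∧ (0 < μ (Set.Iio 0) → 0 < ∫ x, x ∂μ →
        (0 < G 0
        ∧ Tendsto (fun y => G y / y) atTop (nhds (-∫ x, x ∂μ))
        ∧ Tendsto G atTop atBot
        ∧ ∃ bstar : ℝ, 0 < bstar ∧ G bstar = 0
            ∧ (∀ y, 0 ≤ y → y < bstar → 0 < G y)
            ∧ (∀ y, bstar < y → G y < 0))) := by
  have hint : ∀ y : ℝ, 0 ≤ y →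
      Integrable ((Set.Iic y).indicator (fun x => x ^ 2 - y * x)) μ := fun y hy =>
    (integrable_indicator_iff measurableSet_Iic).2 (aux_integrableOn μ hmom1 hmom2 hy)
  have hGind : ∀ y : ℝ, 0 ≤ y →
      G y = ∫ x, (Set.Iic y).indicator (fun x => x ^ 2 - y * x) x ∂μ := fun y hy =>
    (hG y).trans (integral_indicator measurableSet_Iic).symm
  -- Concavity
  have hconc : ConcaveOn ℝ (Set.Ici 0) G := by
    refine ⟨convex_Ici 0, fun a ha b hb t s ht hs hts => ?_⟩
    rw [Set.mem_Ici] at ha hb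
    have hc : 0 ≤ t * a + s * b := add_nonneg (mul_nonneg ht ha) (mul_nonneg hs hb)
    simp only [smul_eq_mul]
    rw [hGind a ha, hGind b hb, hGind _ hc]
    have hptwise : ∀ x : ℝ,
        t * (Set.Iic a).indicator (fun x => x ^ 2 - a * x) x
          + s * (Set.Iic b).indicator (fun x => x ^ 2 - b * x) x
        ≤ (Set.Iic (t * a + s * b)).indicator (fun x => x ^ 2 - (t * a + s * b) * x) x := by
      intro x
      rw [aux_ind_eq ha x, aux_ind_eq hb x, aux_ind_eq hc x]
      by_cases hx : x < 0
      · simp only [if_pos hx]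
        exact le_of_eq (by linear_combination x ^ 2 * hts)
      · simp only [if_neg hx]
        refine le_min ?_ ?_
        · have h1 : t * min 0 (x ^ 2 - a * x) ≤ 0 :=
            mul_nonpos_iff.2 (Or.inl ⟨ht, min_le_left _ _⟩)
          have h2 : s * min 0 (x ^ 2 - b * x) ≤ 0 :=
            mul_nonpos_iff.2 (Or.inl ⟨hs, min_le_left _ _⟩)
          linarith
        · have h1 : t * min 0 (x ^ 2 - a * x) ≤ t * (x ^ 2 - a * x) :=
            mul_le_mul_of_nonneg_left (min_le_right _ _) ht
          have h2 : s * min 0 (x ^ 2 - b * x) ≤ s * (x ^ 2 - b * x) :=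
            mul_le_mul_of_nonneg_left (min_le_right _ _) hs
          have heq : t * (x ^ 2 - a * x) + s * (x ^ 2 - b * x)
              = x ^ 2 - (t * a + s * b) * x := by linear_combination x ^ 2 * hts
          linarith
    calc t * ∫ x, (Set.Iic a).indicator (fun x => x ^ 2 - a * x) x ∂μ
          + s * ∫ x, (Set.Iic b).indicator (fun x => x ^ 2 - b * x) x ∂μ
        = ∫ x, (t * (Set.Iic a).indicator (fun x => x ^ 2 - a * x) x
            + s * (Set.Iic b).indicator (fun x => x ^ 2 - b * x) x) ∂μ := by
          rw [integral_add ((hint a ha).const_mul t) ((hint b hb).const_mul s),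
            integral_const_mul, integral_const_mul]
      _ ≤ _ := integral_mono (((hint a ha).const_mul t).add ((hint b hb).const_mul s))
          (hint _ hc) hptwise
  refine ⟨hconc, fun hμ hm => ?_⟩
  -- G 0 > 0
  have hG0eq : G 0 = ∫ x in Set.Iic 0, x ^ 2 ∂μ := by
    rw [hG 0]; simp only [zero_mul, sub_zero]
  obtain ⟨n, hn⟩ : ∃ n : ℕ, 0 < μ (Set.Iic (-(1 / ((n : ℝ) + 1)))) := by
    by_contra h
    push_neg at h
    have hnull : μ (Set.Iio 0) = 0 := by
      refine measure_mono_null ?_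
        (measure_iUnion_null (s := fun n : ℕ => Set.Iic (-(1 / ((n : ℝ) + 1))))
          (fun n => le_antisymm (h n) (zero_le)))
      intro x hx
      have hx' : (0:ℝ) < -x := by simpa using (Set.mem_Iio.1 hx)
      obtain ⟨n, hn⟩ := exists_nat_gt (1 / (-x))
      refine Set.mem_iUnion.2 ⟨n, Set.mem_Iic.2 ?_⟩
      have h1 : 1 / (-x) < (n : ℝ) + 1 := hn.trans (lt_add_one _)
      have h2 : (1:ℝ) < ((n:ℝ) + 1) * (-x) := by
        rw [div_lt_iff₀ hx'] at h1; linarith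
      have h3 : 1 / ((n:ℝ) + 1) ≤ -x := by
        rw [div_le_iff₀ (by positivity : (0:ℝ) < (n:ℝ) + 1)]; nlinarith
      linarith
    exact absurd hnull hμ.ne'
  have hεpos : (0:ℝ) < 1 / ((n : ℝ) + 1) := by positivity
  have hG0pos : 0 < G 0 := by
    rw [hG0eq]
    have hsub : Set.Iic (-(1 / ((n : ℝ) + 1))) ⊆ Set.Iic (0:ℝ) :=
      Set.Iic_subset_Iic.2 (by linarith)
    have hsubint : IntegrableOn (fun x : ℝ => x ^ 2) (Set.Iic (-(1 / ((n : ℝ) + 1)))) μ :=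
      hmom2.mono_set hsub
    have h1 : (μ (Set.Iic (-(1 / ((n : ℝ) + 1))))).toReal * (1 / ((n : ℝ) + 1)) ^ 2
        ≤ ∫ x in Set.Iic (-(1 / ((n : ℝ) + 1))), x ^ 2 ∂μ := by
      have hmono : ∫ x in Set.Iic (-(1 / ((n : ℝ) + 1))), (1 / ((n : ℝ) + 1)) ^ 2 ∂μ
          ≤ ∫ x in Set.Iic (-(1 / ((n : ℝ) + 1))), x ^ 2 ∂μ :=
        setIntegral_mono_on
          (integrableOn_const (measure_ne_top _ _)) hsubint measurableSet_Iic
          (fun x hx => by nlinarith [Set.mem_Iic.1 hx])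
      simpa [setIntegral_const, smul_eq_mul, Measure.real] using hmono
    have h2 : ∫ x in Set.Iic (-(1 / ((n : ℝ) + 1))), x ^ 2 ∂μ
        ≤ ∫ x in Set.Iic 0, x ^ 2 ∂μ :=
      setIntegral_mono_set hmom2 (Filter.Eventually.of_forall fun x => sq_nonneg x)
        hsub.eventuallyLE
    have h3 : 0 < (μ (Set.Iic (-(1 / ((n : ℝ) + 1))))).toReal :=
      ENNReal.toReal_pos hn.ne' (measure_ne_top μ _)
    nlinarith [mul_pos h3 (pow_pos hεpos 2)]
  -- G y / y → -m
  have hlim : Tendsto (fun y : ℝ => ∫ x, (Set.Iic y).indicator (fun x => x ^ 2 / y - x) x ∂μ)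
      atTop (nhds (∫ x, -x ∂μ)) := by
    apply tendsto_integral_filter_of_dominated_convergence
      (bound := fun x => (Set.Iic (0:ℝ)).indicator (fun x => x ^ 2) x + |x|)
    · filter_upwards with y
      exact (((measurable_id.pow_const 2).div_const y).sub measurable_id).indicator
        measurableSet_Iic |>.aestronglyMeasurable
    · filter_upwards [eventually_ge_atTop (1:ℝ)] with y hy
      filter_upwards with x
      have hy0 : (0:ℝ) < y := by linarith
      by_cases hxy : x ≤ y
      · rw [Set.indicator_of_mem (Set.mem_Iic.2 hxy), Real.norm_eq_abs]
        by_cases hx : x ≤ 0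
        · rw [Set.indicator_of_mem (Set.mem_Iic.2 hx)]
          have h1 : |x ^ 2 / y - x| ≤ |x ^ 2 / y| + |x| := abs_sub _ _
          have h2 : |x ^ 2 / y| ≤ x ^ 2 := by
            rw [abs_div, abs_of_pos hy0, abs_of_nonneg (sq_nonneg x)]
            exact div_le_self (sq_nonneg x) hy
          linarith
        · push_neg at hx
          rw [Set.indicator_of_notMem (fun h => absurd (Set.mem_Iic.1 h) (not_le.2 hx)),
            zero_add, abs_le, abs_of_pos hx]
          have hd : 0 ≤ x ^ 2 / y := by positivity
          have hd2 : x ^ 2 / y ≤ x := by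
            rw [div_le_iff₀ hy0]; nlinarith
          constructor <;> linarith
      · rw [Set.indicator_of_notMem (fun h => hxy (Set.mem_Iic.1 h)), norm_zero]
        exact add_nonneg (Set.indicator_nonneg (fun x _ => sq_nonneg x) x) (abs_nonneg x)
    · exact ((integrable_indicator_iff measurableSet_Iic).2 hmom2).add hmom1.abs
    · refine Filter.Eventually.of_forall fun x => ?_
      have h1 : Tendsto (fun y : ℝ => x ^ 2 / y - x) atTop (nhds (0 - x)) :=
        (Tendsto.div_atTop tendsto_const_nhds tendsto_id).sub_const x
      rw [zero_sub] at h1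
      refine h1.congr' ?_
      filter_upwards [eventually_ge_atTop x] with y hy
      exact (Set.indicator_of_mem (Set.mem_Iic.2 hy) _).symm
  have hGdiv : (fun y => G y / y) =ᶠ[atTop]
      fun y : ℝ => ∫ x, (Set.Iic y).indicator (fun x => x ^ 2 / y - x) x ∂μ := by
    filter_upwards [eventually_gt_atTop (0:ℝ)] with y hy
    rw [hG y, integral_indicator measurableSet_Iic, ← integral_div]
    refine integral_congr_ae (Filter.Eventually.of_forall fun x => ?_)
    field_simp
  have hb : Tendsto (fun y => G y / y) atTop (nhds (-∫ x, x ∂μ)) := by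
    rw [← integral_neg]
    exact (hlim.congr' hGdiv.symm)
  have hbot : Tendsto G atTop atBot := by
    have h := Tendsto.neg_mul_atTop (neg_lt_zero.2 hm) hb tendsto_id
    refine h.congr' ?_
    filter_upwards [eventually_gt_atTop (0:ℝ)] with y hy
    simp only [id_eq]
    exact div_mul_cancel₀ (G y) hy.ne'
  -- a point where G < 0
  obtain ⟨b₀, hb₀pos, hb₀neg⟩ : ∃ b₀ : ℝ, 0 < b₀ ∧ G b₀ < 0 := by
    obtain ⟨b₀, h⟩ := ((hbot.eventually (eventually_lt_atBot (0:ℝ))).and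
      (eventually_gt_atTop (0:ℝ))).exists
    exact ⟨b₀, h.2, h.1⟩
  -- a point a ∈ (0, b₀) where G > 0
  have hDpos : 0 < G 0 - G b₀ := by linarith
  set r : ℝ := G 0 / (2 * (G 0 - G b₀)) with hr
  have hr0 : 0 < r := by positivity
  have hr1 : r < 1 := by
    rw [hr, div_lt_one (by linarith)]; linarith
  set a : ℝ := r * b₀ with hadef
  have ha0 : 0 < a := mul_pos hr0 hb₀pos
  have hab : a < b₀ := by
    calc a = r * b₀ := rfl
      _ < 1 * b₀ := by exact mul_lt_mul_of_pos_right hr1 hb₀pos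
      _ = b₀ := one_mul _
  have hGa : 0 < G a := by
    have happ := hconc.2 (Set.mem_Ici.2 le_rfl) (Set.mem_Ici.2 hb₀pos.le)
      (by linarith : (0:ℝ) ≤ 1 - r) hr0.le (by ring)
    simp only [smul_eq_mul] at happ
    have harg : (1 - r) * 0 + r * b₀ = a := by ring
    rw [harg] at happ
    have hrD : r * (G 0 - G b₀) = G 0 / 2 := by
      rw [hr]; field_simp
    nlinarith
  -- IVT
  have hcont : ContinuousOn G (Set.Ioi (0:ℝ)) := by
    have hconv : ConvexOn ℝ (Set.Ioi (0:ℝ)) (fun y => -G y) :=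
      (hconc.neg).subset Set.Ioi_subset_Ici_self (convex_Ioi 0)
    have := hconv.continuousOn isOpen_Ioi
    exact this.neg.congr (fun y _ => by simp)
  obtain ⟨bstar, hbmem, hbeq⟩ : ∃ bstar ∈ Set.Icc a b₀, G bstar = 0 := by
    have hsub : Set.Icc a b₀ ⊆ Set.Ioi (0:ℝ) := fun x hx => lt_of_lt_of_le ha0 hx.1
    have h := intermediate_value_Icc' hab.le (hcont.mono hsub)
    obtain ⟨bstar, hmem, heq⟩ := h ⟨hb₀neg.le, hGa.le⟩
    exact ⟨bstar, hmem, heq⟩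
  have hbpos : 0 < bstar := lt_of_lt_of_le ha0 hbmem.1
  refine ⟨hG0pos, hb, hbot, bstar, hbpos, hbeq, ?_, ?_⟩
  · intro y hy hyb
    have ht : 0 < (bstar - y) / bstar := div_pos (by linarith) hbpos
    have hs : 0 ≤ y / bstar := div_nonneg hy hbpos.le
    have hts : (bstar - y) / bstar + y / bstar = 1 := by field_simp; ring
    have happ := hconc.2 (Set.mem_Ici.2 le_rfl) (Set.mem_Ici.2 hbpos.le) ht.le hs hts
    simp only [smul_eq_mul] at happ
    have harg : (bstar - y) / bstar * 0 + y / bstar * bstar = y := by field_simp; ring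
    rw [harg, hbeq] at happ
    nlinarith [mul_pos ht hG0pos]
  · intro y hyb
    by_contra hcon
    push_neg at hcon
    have hy0 : 0 < y := hbpos.trans hyb
    have ht : 0 < (y - bstar) / y := div_pos (by linarith) hy0
    have hs : 0 ≤ bstar / y := div_nonneg hbpos.le hy0.le
    have hts : (y - bstar) / y + bstar / y = 1 := by field_simp; ring
    have happ := hconc.2 (Set.mem_Ici.2 le_rfl) (Set.mem_Ici.2 hy0.le) ht.le hs hts
    simp only [smul_eq_mul] at happ
    have harg : (y - bstar) / y * 0 + bstar / y * y = bstar := by field_simp; ring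
    rw [harg, hbeq] at happ
    nlinarith [mul_pos ht hG0pos, mul_nonneg hs hcon]
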